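/- Let φ = (1+√5)/2, c(m) = m/(φ+2), s(m) = √(φ·m/(5(φ+2))). Fix a real number x, and for each n let k_n = ⌊c(n) + x·s(n)⌋. Define S_n(k) = φ^{-n}·(n-k)^{n-k} / (k^k·(n-2k)^{n-2k}) for integers 0 < k < n/2. Then, as n → ∞, S_n(k_n) converges to e^{-x²/2}. -/

import Mathlib

open Filter

/-- The golden mean `φ = (1+√5)/2`. -/
noncomputable def phi : ℝ := (1 + Real.sqrt 5) / 2

/-- Leading-order mean `c(m) = m/(φ+2)` of the number of non-forced Zeckendorf
summands on `[F_m, F_{m+1})`. -/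
noncomputable def cLead (m : ℕ) : ℝ := (m : ℝ) / (phi + 2)

/-- Leading-order standard deviation `s(m) = √(φ·m/(5(φ+2)))`. -/
noncomputable def sLead (m : ℕ) : ℝ := Real.sqrt (phi * (m : ℝ) / (5 * (phi + 2)))

/-- `S_n(k) = φ^{-n}·(n-k)^{n-k}/(k^k·(n-2k)^{n-2k})`, with real exponents. -/
noncomputable def Sfactor (n k : ℕ) : ℝ :=
  phi ^ (-(n : ℝ)) * ((n : ℝ) - (k : ℝ)) ^ ((n : ℝ) - (k : ℝ)) /
    ((k : ℝ) ^ (k : ℝ) * ((n : ℝ) - 2 * (k : ℝ)) ^ ((n : ℝ) - 2 * (k : ℝ)))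

lemma sqrt5_sq : Real.sqrt 5 ^ 2 = 5 := Real.sq_sqrt (by norm_num)
lemma sqrt5_gt : (2.2:ℝ) < Real.sqrt 5 := by nlinarith [sqrt5_sq, Real.sqrt_nonneg 5]
lemma sqrt5_lt : Real.sqrt 5 < 2.3 := by nlinarith [sqrt5_sq, Real.sqrt_nonneg 5]
lemma phi_gt : (1.6:ℝ) < phi := by rw [phi]; nlinarith [sqrt5_gt]
lemma phi_lt : phi < 1.7 := by rw [phi]; nlinarith [sqrt5_lt]
lemma phi_sq : phi * phi = phi + 1 := by rw [phi]; linear_combination sqrt5_sq / 4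

noncomputable def Phi (w : ℝ) : ℝ :=
  if w = 0 then 1/2 else ((1 - w) * Real.log (1 - w) + w) / w ^ 2

lemma Phi_identity (b u : ℝ) (hb : 0 < b) (hbu : 0 < b - u) :
    (b - u) * Real.log (1 - u / b) = -u + u ^ 2 / b * Phi (u / b) := by
  rcases eq_or_ne u 0 with h | h
  · simp [h]
  · have hw : u / b ≠ 0 := div_ne_zero h hb.ne'
    rw [Phi, if_neg hw]
    have h1 : (1 : ℝ) - u / b = (b - u) / b := by field_simp
    rw [h1]
    field_simp
    ring

lemma Phi_bound (w : ℝ) (hw : |w| ≤ 1/2) : |Phi w - 1/2| ≤ 4 * |w| := by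
  rcases eq_or_ne w 0 with h | h
  · simp [h, Phi]
  · have hw1 : |w| < 1 := lt_of_le_of_lt hw (by norm_num)
    have hkey := Real.abs_log_sub_add_sum_range_le hw1 2
    have hsum : (∑ i ∈ Finset.range 2, w ^ (i + 1) / (i + 1)) = w + w ^ 2 / 2 := by
      rw [Finset.sum_range_succ, Finset.sum_range_succ, Finset.sum_range_zero]
      norm_num
    rw [hsum] at hkey
    set L := Real.log (1 - w) with hL
    set E := w + w ^ 2 / 2 + L with hEdef
    have hEbound : |E| ≤ 2 * |w| ^ 3 := by
      have h12 : (1:ℝ)/2 ≤ 1 - |w| := by linarith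
      calc |E| ≤ |w| ^ 3 / (1 - |w|) := hkey
        _ ≤ |w| ^ 3 / (1/2) := by
            apply div_le_div_of_nonneg_left (by positivity) (by norm_num) h12
        _ = 2 * |w| ^ 3 := by ring
    have hid : Phi w - 1/2 = ((1 - w) * E + w ^ 3 / 2) / w ^ 2 := by
      rw [Phi, if_neg h, ← hL]
      have hLval : L = E - w - w ^ 2 / 2 := by rw [hEdef]; ring
      rw [hLval]
      field_simp
      ring
    rw [hid, abs_div, abs_of_nonneg (sq_nonneg w)]
    rw [div_le_iff₀ (by positivity : (0:ℝ) < w ^ 2)]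
    have h3 : |(1 - w) * E + w ^ 3 / 2| ≤ |1 - w| * |E| + |w| ^ 3 / 2 := by
      calc |(1 - w) * E + w ^ 3 / 2| ≤ |(1 - w) * E| + |w ^ 3 / 2| := abs_add_le _ _
        _ = |1 - w| * |E| + |w| ^ 3 / 2 := by
            rw [abs_mul, abs_div, abs_pow]
            norm_num
    have h4 : |1 - w| ≤ 3/2 := by
      rw [abs_le] at hw ⊢; constructor <;> linarith [hw.1, hw.2]
    have h5 : |w| ^ 3 = |w| * w ^ 2 := by
      rw [pow_succ, sq_abs]; ring
    calc |(1 - w) * E + w ^ 3 / 2| ≤ |1 - w| * |E| + |w| ^ 3 / 2 := h3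
      _ ≤ (3/2) * (2 * |w| ^ 3) + |w| ^ 3 / 2 := by
          gcongr
      _ = (7/2) * (|w| * w ^ 2) := by rw [← h5]; ring
      _ ≤ 4 * |w| * w ^ 2 := by nlinarith [abs_nonneg w, sq_nonneg w]

lemma Phi_tendsto {f : ℕ → ℝ} (hf : Tendsto f atTop (nhds 0)) :
    Tendsto (fun n => Phi (f n)) atTop (nhds (1/2)) := by
  rw [tendsto_iff_dist_tendsto_zero]
  have h1 : ∀ᶠ n in atTop, |f n| ≤ 1/2 := by
    have := Metric.tendsto_nhds.mp hf (1/2) (by norm_num)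
    filter_upwards [this] with n hn
    rw [Real.dist_eq, sub_zero] at hn
    exact hn.le
  have hb : ∀ᶠ n in atTop, dist (Phi (f n)) (1/2) ≤ 4 * |f n| := by
    filter_upwards [h1] with n hn
    rw [Real.dist_eq]
    exact Phi_bound _ hn
  have hg : Tendsto (fun n => 4 * |f n|) atTop (nhds 0) := by
    simpa using (hf.abs).const_mul (4:ℝ)
  exact squeeze_zero' (Eventually.of_forall fun n => dist_nonneg) hb hg

lemma Sfactor_eq_exp (n k : ℕ) (u : ℝ)
    (hN : (1:ℝ) ≤ (n:ℝ))
    (hk : (k:ℝ) = (n:ℝ)/(phi+2) + u)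
    (hu : |u| ≤ (n:ℝ)/10) :
    Sfactor n k = Real.exp (u^2/(n:ℝ) *
      (Phi (u / ((n:ℝ)*(phi+1)/(phi+2))) * ((phi+2)/(phi+1))
       - Phi (-u / ((n:ℝ)/(phi+2))) * (phi+2)
       - 4 * Phi (2*u / ((n:ℝ)*phi/(phi+2))) * ((phi+2)/phi))) := by
  have h1 : (1.6:ℝ) < phi := phi_gt
  have h2 : phi < 1.7 := phi_lt
  have hsq : phi * phi = phi + 1 := phi_sq
  set N := (n:ℝ) with hNdef
  have hN0 : (0:ℝ) < N := lt_of_lt_of_le one_pos hN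
  have hp : (0:ℝ) < phi := by linarith
  have hp1 : (0:ℝ) < phi + 1 := by linarith
  have hp2 : (0:ℝ) < phi + 2 := by linarith
  have hu' := abs_le.mp hu
  have hApos : 0 < N/(phi+2) + u := by
    have : N/10 < N/(phi+2) := by
      rw [div_lt_div_iff₀ (by norm_num) hp2]; nlinarith
    linarith [hu'.1]
  have hBpos : 0 < N*(phi+1)/(phi+2) - u := by
    have : N/10 < N*(phi+1)/(phi+2) := by
      rw [div_lt_div_iff₀ (by norm_num) hp2]; nlinarith
    linarith [hu'.2]
  have hCpos : 0 < N*phi/(phi+2) - 2*u := by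
    have : N/5 < N*phi/(phi+2) := by
      rw [div_lt_div_iff₀ (by norm_num) hp2]; nlinarith
    linarith [hu'.1, hu'.2]
  have hA0 : 0 < N/(phi+2) := by positivity
  have hB0 : 0 < N*(phi+1)/(phi+2) := div_pos (mul_pos hN0 hp1) hp2
  have hC0 : 0 < N*phi/(phi+2) := div_pos (mul_pos hN0 hp) hp2
  have e1 : N - (k:ℝ) = N*(phi+1)/(phi+2) - u := by
    rw [hk]; field_simp; ring
  have e2 : N - 2*(k:ℝ) = N*phi/(phi+2) - 2*u := by
    rw [hk]; field_simp; ring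
  have hS : Sfactor n k = phi ^ (-N) * (N*(phi+1)/(phi+2) - u) ^ (N*(phi+1)/(phi+2) - u) /
      ((N/(phi+2) + u) ^ (N/(phi+2) + u) * (N*phi/(phi+2) - 2*u) ^ (N*phi/(phi+2) - 2*u)) := by
    simp only [Sfactor]
    rw [e1, e2, hk]
  have hSpos : 0 < Sfactor n k := by
    rw [hS]
    exact div_pos (mul_pos (Real.rpow_pos_of_pos hp _) (Real.rpow_pos_of_pos hBpos _))
      (mul_pos (Real.rpow_pos_of_pos hApos _) (Real.rpow_pos_of_pos hCpos _))
  have hlog1 : Real.log (Sfactor n k) = (-N) * Real.log phi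
      + (N*(phi+1)/(phi+2) - u) * Real.log (N*(phi+1)/(phi+2) - u)
      - ((N/(phi+2) + u) * Real.log (N/(phi+2) + u)
         + (N*phi/(phi+2) - 2*u) * Real.log (N*phi/(phi+2) - 2*u)) := by
    rw [hS, Real.log_div
        (ne_of_gt (mul_pos (Real.rpow_pos_of_pos hp _) (Real.rpow_pos_of_pos hBpos _)))
        (ne_of_gt (mul_pos (Real.rpow_pos_of_pos hApos _) (Real.rpow_pos_of_pos hCpos _))),
      Real.log_mul (ne_of_gt (Real.rpow_pos_of_pos hp _)) (ne_of_gt (Real.rpow_pos_of_pos hBpos _)),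
      Real.log_mul (ne_of_gt (Real.rpow_pos_of_pos hApos _)) (ne_of_gt (Real.rpow_pos_of_pos hCpos _)),
      Real.log_rpow hp, Real.log_rpow hBpos, Real.log_rpow hApos, Real.log_rpow hCpos]
  have dB : Real.log (N*(phi+1)/(phi+2) - u)
      = Real.log (N*(phi+1)/(phi+2)) + Real.log (1 - u / (N*(phi+1)/(phi+2))) := by
    rw [show (1 - u / (N*(phi+1)/(phi+2))) = (N*(phi+1)/(phi+2) - u) / (N*(phi+1)/(phi+2)) by
          field_simp; try ring,
      Real.log_div hBpos.ne' hB0.ne']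
    ring
  have dA : Real.log (N/(phi+2) + u)
      = Real.log (N/(phi+2)) + Real.log (1 - -u / (N/(phi+2))) := by
    rw [show (1 - -u / (N/(phi+2))) = (N/(phi+2) + u) / (N/(phi+2)) by field_simp; try ring,
      Real.log_div hApos.ne' hA0.ne']
    ring
  have dC : Real.log (N*phi/(phi+2) - 2*u)
      = Real.log (N*phi/(phi+2)) + Real.log (1 - 2*u / (N*phi/(phi+2))) := by
    rw [show (1 - 2*u / (N*phi/(phi+2))) = (N*phi/(phi+2) - 2*u) / (N*phi/(phi+2)) by field_simp; try ring,
      Real.log_div hCpos.ne' hC0.ne']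
    ring
  have p1 := Phi_identity (N*(phi+1)/(phi+2)) u hB0 hBpos
  have p2 := Phi_identity (N/(phi+2)) (-u) hA0 (by linarith : 0 < N/(phi+2) - -u)
  have p3 := Phi_identity (N*phi/(phi+2)) (2*u) hC0 hCpos
  have lA : Real.log (N/(phi+2)) = Real.log N - Real.log (phi+2) :=
    Real.log_div hN0.ne' hp2.ne'
  have lB : Real.log (N*(phi+1)/(phi+2)) = Real.log N + Real.log (phi+1) - Real.log (phi+2) := by
    rw [Real.log_div (mul_pos hN0 hp1).ne' hp2.ne', Real.log_mul hN0.ne' hp1.ne']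
  have lC : Real.log (N*phi/(phi+2)) = Real.log N + Real.log phi - Real.log (phi+2) := by
    rw [Real.log_div (mul_pos hN0 hp).ne' hp2.ne', Real.log_mul hN0.ne' hp.ne']
  have lphi1 : Real.log (phi+1) = 2 * Real.log phi := by
    rw [← hsq, Real.log_mul hp.ne' hp.ne']; ring
  have cb : u^2 / (N*(phi+1)/(phi+2)) = u^2/N * ((phi+2)/(phi+1)) := by
    field_simp; try ring
  have ca : (-u)^2 / (N/(phi+2)) = u^2/N * (phi+2) := by
    field_simp; try ring
  have cc : (2*u)^2 / (N*phi/(phi+2)) = u^2/N * (4*(phi+2)/phi) := by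
    field_simp; try ring
  rw [cb] at p1
  rw [ca] at p2
  rw [cc] at p3
  rw [← Real.exp_log hSpos]
  congr 1
  rw [hlog1, dB, dA, dC, lB, lA, lC, lphi1]
  have hinv : (phi + 2) * (phi + 2)⁻¹ = 1 := mul_inv_cancel₀ hp2.ne'
  linear_combination p1 - p2 - p3 + N * Real.log phi * hinv

lemma sqrt_nat_atTop : Tendsto (fun n : ℕ => Real.sqrt n) atTop atTop := by
  apply tendsto_atTop_atTop.mpr
  intro b
  refine ⟨⌈b⌉₊ ^ 2, fun n hn => ?_⟩
  have h1 : ((⌈b⌉₊ : ℝ)) ^ 2 ≤ (n : ℝ) := by exact_mod_cast hn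
  calc b ≤ (⌈b⌉₊ : ℝ) := Nat.le_ceil b
    _ ≤ Real.sqrt n := Real.le_sqrt_of_sq_le h1

lemma inv_sqrt_tendsto : Tendsto (fun n : ℕ => 1 / Real.sqrt n) atTop (nhds 0) := by
  simp only [one_div]
  exact sqrt_nat_atTop.inv_tendsto_atTop

set_option maxHeartbeats 1000000 in
/-- Analysis of the exponential factor: with `k_n = ⌊c(n) + x·s(n)⌋`,
`S_n(k_n) → e^{-x²/2}` as `n → ∞`. -/
theorem exponential_factor_limit (x : ℝ) :
    Tendsto (fun n : ℕ => Sfactor n ⌊cLead n + x * sLead n⌋₊)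
      atTop (nhds (Real.exp (-x ^ 2 / 2))) := by
  have h1 : (1.6:ℝ) < phi := phi_gt
  have h2 : phi < 1.7 := phi_lt
  have hsq : phi * phi = phi + 1 := phi_sq
  have hp : (0:ℝ) < phi := by linarith
  have hp1 : (0:ℝ) < phi + 1 := by linarith
  have hp2 : (0:ℝ) < phi + 2 := by linarith
  set σ2 : ℝ := phi / (5*(phi+2)) with hσ2
  have hσ2pos : 0 < σ2 := by rw [hσ2]; positivity
  have hσ2le : σ2 ≤ 1 := by
    rw [hσ2, div_le_one (by positivity)]; nlinarith
  have hsσ : Real.sqrt σ2 ≤ 1 := Real.sqrt_le_one.mpr hσ2le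
  have hsσ0 : 0 ≤ Real.sqrt σ2 := Real.sqrt_nonneg _
  set k : ℕ → ℕ := fun n => ⌊cLead n + x * sLead n⌋₊ with hkdef
  set u : ℕ → ℝ := fun n => (k n : ℝ) - cLead n with hudef
  have hs : ∀ n : ℕ, sLead n = Real.sqrt σ2 * Real.sqrt n := by
    intro n
    rw [sLead, ← Real.sqrt_mul hσ2pos.le]
    congr 1
    rw [hσ2]; ring
  have hkval : ∀ n : ℕ, (k n : ℝ) = (n:ℝ)/(phi+2) + u n := by
    intro n; simp only [hudef, cLead]; ring
  -- master eventual bound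
  have hE : ∀ᶠ n : ℕ in atTop, |x| * Real.sqrt n + 1 ≤ (n:ℝ)/10 ∧ (1:ℝ) ≤ (n:ℝ) := by
    filter_upwards [eventually_ge_atTop (⌈(100:ℝ)*(|x|+1)^2⌉₊ + 1)] with n hn
    have hn1 : ((100:ℝ)*(|x|+1)^2) ≤ (n:ℝ) := by
      calc ((100:ℝ)*(|x|+1)^2) ≤ (⌈(100:ℝ)*(|x|+1)^2⌉₊ : ℝ) := Nat.le_ceil _
        _ ≤ (n:ℝ) := by exact_mod_cast Nat.le_of_succ_le hn
    have hx0 : (0:ℝ) ≤ |x| := abs_nonneg x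
    have hsn : 10*(|x|+1) ≤ Real.sqrt n := by
      apply Real.le_sqrt_of_sq_le; nlinarith
    have hms : Real.sqrt n * Real.sqrt n = (n:ℝ) := Real.mul_self_sqrt (Nat.cast_nonneg n)
    constructor
    · nlinarith [Real.sqrt_nonneg (n:ℝ)]
    · nlinarith
  -- floor bounds
  have hub : ∀ᶠ n : ℕ in atTop,
      x * sLead n - 1 < u n ∧ u n ≤ x * sLead n ∧ |u n| ≤ |x| * Real.sqrt n + 1 := by
    filter_upwards [hE] with n hn
    have hsn0 : (0:ℝ) ≤ Real.sqrt n := Real.sqrt_nonneg _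
    have hxs : |x * sLead n| ≤ |x| * Real.sqrt n := by
      rw [abs_mul, hs n]
      have : |Real.sqrt σ2 * Real.sqrt n| = Real.sqrt σ2 * Real.sqrt n := by
        rw [abs_of_nonneg (mul_nonneg hsσ0 hsn0)]
      rw [this]
      have : Real.sqrt σ2 * Real.sqrt n ≤ 1 * Real.sqrt n := by
        apply mul_le_mul_of_nonneg_right hsσ hsn0
      nlinarith [abs_nonneg x]
    have hxs' := abs_le.mp hxs
    have hcpos : (n:ℝ)/10 ≤ cLead n := by
      rw [cLead, div_le_div_iff₀ (by norm_num) hp2]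
      nlinarith [hn.2]
    have hr : (0:ℝ) ≤ cLead n + x * sLead n := by linarith [hn.1]
    have hfl : (⌊cLead n + x * sLead n⌋₊ : ℝ) ≤ cLead n + x * sLead n := Nat.floor_le hr
    have hfl2 : cLead n + x * sLead n < (⌊cLead n + x * sLead n⌋₊ : ℝ) + 1 :=
      Nat.lt_floor_add_one _
    have hu1 : u n ≤ x * sLead n := by
      simp only [hudef, hkdef]; linarith
    have hu2 : x * sLead n - 1 < u n := by
      simp only [hudef, hkdef]; linarith
    refine ⟨hu2, hu1, ?_⟩
    rw [abs_le]
    constructor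
    · linarith [hxs'.1]
    · linarith [hxs'.2]
  -- convergence of u/√n
  have hv : Tendsto (fun n => u n / Real.sqrt n) atTop (nhds (x * Real.sqrt σ2)) := by
    rw [tendsto_iff_dist_tendsto_zero]
    apply squeeze_zero' (Eventually.of_forall fun n => dist_nonneg)
      (g := fun n : ℕ => 1 / Real.sqrt n) _ inv_sqrt_tendsto
    filter_upwards [hub, hE] with n hn hn2
    have hsn1 : (1:ℝ) ≤ Real.sqrt n := by
      rw [show (1:ℝ) = Real.sqrt 1 by simp]
      exact Real.sqrt_le_sqrt hn2.2
    have hsn0 : (0:ℝ) < Real.sqrt n := by linarith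
    rw [Real.dist_eq, abs_le]
    have e : u n / Real.sqrt n - x * Real.sqrt σ2
        = (u n - x * sLead n) / Real.sqrt n := by
      rw [hs n]
      field_simp
    rw [e]
    constructor
    · rw [le_div_iff₀ hsn0]
      have : -(1:ℝ) ≤ u n - x * sLead n := by linarith [hn.1]
      calc -(1 / Real.sqrt n) * Real.sqrt n = -1 := by field_simp
        _ ≤ u n - x * sLead n := this
    · rw [div_le_div_iff₀ hsn0 hsn0]
      have h0 : u n - x * sLead n ≤ 0 := by linarith [hn.2.1]
      nlinarith
  -- u/n → 0
  have hw0 : Tendsto (fun n => u n / (n:ℝ)) atTop (nhds 0) := by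
    have := hv.mul inv_sqrt_tendsto
    rw [mul_zero] at this
    apply this.congr'
    filter_upwards [hE] with n hn
    have hms : Real.sqrt n * Real.sqrt n = (n:ℝ) := Real.mul_self_sqrt (Nat.cast_nonneg n)
    have hsn0 : Real.sqrt n ≠ 0 := by
      intro h; rw [h] at hms; simp at hms; linarith [hn.2, hms]
    rw [div_mul_div_comm, mul_one, hms]
  -- u²/n → x²σ2
  have husq : Tendsto (fun n => (u n)^2 / (n:ℝ)) atTop (nhds (x^2 * σ2)) := by
    have := hv.mul hv
    have hval : (x * Real.sqrt σ2) * (x * Real.sqrt σ2) = x^2 * σ2 := by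
      have : Real.sqrt σ2 * Real.sqrt σ2 = σ2 := Real.mul_self_sqrt hσ2pos.le
      nlinarith
    rw [hval] at this
    apply this.congr'
    filter_upwards [hE] with n hn
    have hms : Real.sqrt n * Real.sqrt n = (n:ℝ) := Real.mul_self_sqrt (Nat.cast_nonneg n)
    rw [div_mul_div_comm, hms]
    ring
  -- the three Phi arguments tend to 0
  have hw1 : Tendsto (fun n => u n / ((n:ℝ)*(phi+1)/(phi+2))) atTop (nhds 0) := by
    have := hw0.mul_const ((phi+2)/(phi+1))
    rw [zero_mul] at this
    apply this.congr'
    filter_upwards [hE] with n hn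
    have hn0 : (n:ℝ) ≠ 0 := by linarith [hn.2]
    rw [show (n:ℝ)*(phi+1)/(phi+2) = (n:ℝ) * ((phi+1)/(phi+2)) from by ring, ← div_div,
      div_eq_mul_inv (u n / (n:ℝ)) ((phi+1)/(phi+2)), inv_div]
  have hw2 : Tendsto (fun n => -u n / ((n:ℝ)/(phi+2))) atTop (nhds 0) := by
    have := hw0.mul_const (-(phi+2))
    rw [zero_mul] at this
    apply this.congr'
    filter_upwards [hE] with n hn
    have hn0 : (n:ℝ) ≠ 0 := by linarith [hn.2]
    rw [div_div_eq_mul_div]; ring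
  have hw3 : Tendsto (fun n => 2 * u n / ((n:ℝ)*phi/(phi+2))) atTop (nhds 0) := by
    have := hw0.mul_const (2*(phi+2)/phi)
    rw [zero_mul] at this
    apply this.congr'
    filter_upwards [hE] with n hn
    have hn0 : (n:ℝ) ≠ 0 := by linarith [hn.2]
    rw [show (n:ℝ)*phi/(phi+2) = (n:ℝ) * (phi/(phi+2)) from by ring, ← div_div,
      div_eq_mul_inv (2 * u n / (n:ℝ)) (phi/(phi+2)), inv_div]
    ring
  -- the bracket
  have hbr : Tendsto (fun n => Phi (u n / ((n:ℝ)*(phi+1)/(phi+2))) * ((phi+2)/(phi+1))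
      - Phi (-u n / ((n:ℝ)/(phi+2))) * (phi+2)
      - 4 * Phi (2*u n / ((n:ℝ)*phi/(phi+2))) * ((phi+2)/phi)) atTop
      (nhds (1/2 * ((phi+2)/(phi+1)) - 1/2 * (phi+2) - 4 * (1/2) * ((phi+2)/phi))) := by
    exact (((Phi_tendsto hw1).mul_const _).sub ((Phi_tendsto hw2).mul_const _)).sub
      (((Phi_tendsto hw3).const_mul 4).mul_const _)
  have hg : Tendsto (fun n => (u n)^2/(n:ℝ) *
      (Phi (u n / ((n:ℝ)*(phi+1)/(phi+2))) * ((phi+2)/(phi+1))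
       - Phi (-u n / ((n:ℝ)/(phi+2))) * (phi+2)
       - 4 * Phi (2*u n / ((n:ℝ)*phi/(phi+2))) * ((phi+2)/phi))) atTop
      (nhds (-x ^ 2 / 2)) := by
    have := husq.mul hbr
    have hval : x^2 * σ2 * (1/2 * ((phi+2)/(phi+1)) - 1/2 * (phi+2) - 4 * (1/2) * ((phi+2)/phi))
        = -x ^ 2 / 2 := by
      rw [hσ2]
      field_simp
      linear_combination (-x^2) * hsq
    rwa [hval] at this
  have hexp := (Real.continuous_exp.tendsto _).comp hg
  apply hexp.congr'
  filter_upwards [hE, hub] with n hn hn2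
  have hu10 : |u n| ≤ (n:ℝ)/10 := le_trans hn2.2.2 hn.1
  exact (Sfactor_eq_exp n (k n) (u n) hn.2 (hkval n) hu10).symm
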